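/- Let G' = (V', E') be a simple, undirected, connected graph with n' ≥ 1 vertices, and let v₁, v₂, …, v_{n'} be an enumeration of its vertices in any order. For i ∈ {1, …, n'−1}, let f(i) = min{ d_{G'}(v_i, v_j) : j ∈ {i+1, …, n'} }. Then Σ_{i=1}^{n'−1} f(i) ≤ 2·n'·log₂ n'. -/

import Mathlib

open SimpleGraph Finset

section
variable {V : Type*} {G : SimpleGraph V}

variable {V : Type*} {G : SimpleGraph V}

lemma aux_dist_getVert_le (hconn : G.Connected) {u w : V} (p : G.Walk u w) (k : ℕ) :
    G.dist u (p.getVert k) ≤ k := by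
  induction p generalizing k with
  | nil => simp [SimpleGraph.Walk.getVert, SimpleGraph.dist_self]
  | cons h q ih =>
    cases k with
    | zero => simp
    | succ k =>
      rw [SimpleGraph.Walk.getVert_cons_succ]
      calc G.dist _ _ ≤ G.dist _ _ + G.dist _ _ := hconn.dist_triangle
        _ ≤ 1 + k := by
            gcongr
            · exact le_of_eq (SimpleGraph.dist_eq_one_iff_adj.mpr h)
            · exact ih k
        _ = k + 1 := by omega

lemma aux_getVert_dist_le {u w : V} (p : G.Walk u w) (k : ℕ) :
    G.dist (p.getVert k) w ≤ p.length - k := by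
  induction p generalizing k with
  | nil => simp [SimpleGraph.Walk.getVert, SimpleGraph.dist_self]
  | cons h q ih =>
    cases k with
    | zero =>
      simpa using le_trans (SimpleGraph.dist_le (SimpleGraph.Walk.cons h q)) (by simp)
    | succ k =>
      rw [SimpleGraph.Walk.getVert_cons_succ]
      simpa using ih k

lemma aux_dist_getVert_eq (hconn : G.Connected) {u w : V} (p : G.Walk u w)
    (hp : p.length = G.dist u w) {k : ℕ} (hk : k ≤ p.length) :
    G.dist u (p.getVert k) = k := by
  refine le_antisymm (aux_dist_getVert_le hconn p k) ?_
  have h1 := aux_getVert_dist_le p k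
  have h2 : G.dist u w ≤ G.dist u (p.getVert k) + G.dist (p.getVert k) w :=
    hconn.dist_triangle
  omega

lemma aux_ball_card [Fintype V] [DecidableEq V] (hconn : G.Connected) (c : V) (r : ℕ)
    (hr : r + 1 ≤ Fintype.card V) :
    r + 1 ≤ (Finset.univ.filter (fun x => G.dist c x ≤ r)).card := by
  classical
  by_cases hex : ∃ u, r ≤ G.dist c u
  · obtain ⟨u, hu⟩ := hex
    obtain ⟨p, hp⟩ := (hconn c u).exists_walk_length_eq_dist
    have hlen : r ≤ p.length := by omega
    have key : ∀ k ≤ r, G.dist c (p.getVert k) = k := fun k hk =>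
      aux_dist_getVert_eq hconn p hp (le_trans hk hlen)
    calc r + 1 = (Finset.range (r + 1)).card := by simp
      _ ≤ _ := by
          apply Finset.card_le_card_of_injOn (fun k => p.getVert k)
          · intro k hk
            simp only [Finset.coe_range, Set.mem_Iio] at hk
            simp only [Finset.mem_coe, Finset.mem_filter, Finset.mem_univ, true_and]
            rw [key k (by omega)]; omega
          · intro k hk k' hk' he
            simp only [Finset.coe_range, Set.mem_Iio] at hk hk'
            simp only at he
            have h1 := key k (by omega)
            have h2 := key k' (by omega)
            rw [he, h2] at h1
            omega
  · push_neg at hex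
    have : (Finset.univ.filter (fun x => G.dist c x ≤ r)) = Finset.univ := by
      apply Finset.filter_true_of_mem
      intro x _
      exact le_of_lt (hex x)
    rw [this, Finset.card_univ]
    exact hr

end

lemma aux_halfsum (K : ℕ) :
    ∑ d ∈ Icc 1 (2*K), ((((d+1)/2 : ℕ) : ℝ))⁻¹ = 2 * (harmonic K : ℝ) := by
  induction K with
  | zero => simp
  | succ K ih =>
    have h1 : 2 * (K + 1) = (2*K + 1) + 1 := by ring
    rw [h1, Finset.sum_Icc_succ_top (by omega), Finset.sum_Icc_succ_top (by omega),
      ih, harmonic_succ]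
    have e1 : ((2*K+1+1)/2 : ℕ) = K + 1 := by omega
    have e2 : ((2*K+1+1+1)/2 : ℕ) = K + 1 := by omega
    rw [e1, e2]
    push_cast
    ring

lemma aux_log (n : ℕ) (hn : 2 ≤ n) : (harmonic (n/2) : ℝ) ≤ Real.logb 2 n := by
  have hK1 : 1 ≤ n / 2 := by omega
  have h1 : (harmonic (n/2) : ℝ) ≤ 1 + Real.log (n/2 : ℕ) := harmonic_le_one_add_log _
  have h2 : Real.log ((n/2 : ℕ) : ℝ) ≤ Real.log ((n : ℝ)/2) := by
    apply Real.log_le_log (by positivity)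
    have : (2 * (n/2) : ℕ) ≤ n := by omega
    rw [le_div_iff₀ (by norm_num)]
    exact_mod_cast by linarith [this]
  have h3 : Real.log ((n:ℝ)/2) = Real.log n - Real.log 2 := by
    rw [Real.log_div (by positivity) (by norm_num)]
  have hln : Real.log 2 ≤ Real.log n := Real.log_le_log (by norm_num) (by exact_mod_cast hn)
  have l2p : (0:ℝ) < Real.log 2 := Real.log_pos (by norm_num)
  have l2lt : Real.log 2 < 1 := by
    have := Real.log_two_lt_d9; linarith
  rw [Real.logb, le_div_iff₀ l2p]
  nlinarith [mul_nonneg (sub_nonneg.mpr hln) (sub_nonneg.mpr l2lt.le)]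

/-- Let `G'` be a simple, undirected, connected graph with `n' ≥ 1`
vertices, and let `v 0, v 1, …, v (n'-1)` be an enumeration of its vertices in any
order. For each index `i < n' − 1`, let `f(i)` be the minimum distance from `v i` to a
later vertex `v j` (`i < j`). Then `Σ_{i < n'−1} f(i) ≤ 2·n'·log₂ n'`. -/
theorem sum_min_dist_to_later_le {V : Type*} [Fintype V] (G : SimpleGraph V)
    (hconn : G.Connected) (n' : ℕ) (hn' : 1 ≤ n') (hcard : Fintype.card V = n')
    (v : Fin n' → V) (hv : Function.Bijective v) :
    ((∑ i ∈ Finset.univ.filter (fun i : Fin n' => (i : ℕ) < n' - 1),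
        sInf {d : ℕ | ∃ j : Fin n', i < j ∧ G.dist (v i) (v j) = d} : ℕ) : ℝ) ≤
      2 * n' * Real.logb 2 n' := by
  classical
  set f : Fin n' → ℕ := fun i => sInf {d : ℕ | ∃ j : Fin n', i < j ∧ G.dist (v i) (v j) = d}
    with hf
  set I := Finset.univ.filter (fun i : Fin n' => (i : ℕ) < n' - 1) with hI
  rcases eq_or_lt_of_le hn' with h1 | h2
  · have : I = ∅ := by
      rw [hI]
      apply Finset.filter_false_of_mem
      intro i _
      omega
    rw [this]
    simp [← h1]
  -- now 2 ≤ n'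
  have hn2 : 2 ≤ n' := h2
  -- nonempty sets and membership
  have hmemI : ∀ i : Fin n', i ∈ I ↔ (i : ℕ) < n' - 1 := by
    intro i; simp [hI]
  have hfmem : ∀ i ∈ I, f i ∈ {d : ℕ | ∃ j : Fin n', i < j ∧ G.dist (v i) (v j) = d} := by
    intro i hi
    apply Nat.sInf_mem
    refine ⟨G.dist (v i) (v ⟨(i:ℕ)+1, by rw [hmemI] at hi; omega⟩), ⟨_, ?_, rfl⟩⟩
    rw [Fin.lt_def]
    simp
  -- f i ≤ n' - 1
  have hfle : ∀ i ∈ I, f i ≤ n' - 1 := by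
    intro i hi
    obtain ⟨j, hij, hd⟩ := hfmem i hi
    obtain ⟨p, hp, hlen⟩ := hconn.exists_path_of_dist (v i) (v j)
    have := hp.length_lt
    rw [hlen] at this
    omega
  -- key: d ≤ f i → distances to later vertices are ≥ d
  have hkey : ∀ (i j : Fin n') (d : ℕ), d ≤ f i → i < j → d ≤ G.dist (v i) (v j) := by
    intro i j d hd hij
    exact le_trans hd (Nat.sInf_le ⟨j, hij, rfl⟩)
  -- Step B: sum swap
  have hsum : ∑ i ∈ I, f i
      = ∑ d ∈ Icc 1 (n' - 1), (I.filter (fun i => d ≤ f i)).card := by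
    have h1 : ∀ i ∈ I, f i = ∑ d ∈ Icc 1 (n' - 1), if d ≤ f i then 1 else 0 := by
      intro i hi
      have : (Icc 1 (n' - 1)).filter (fun d => d ≤ f i) = Icc 1 (f i) := by
        ext d
        simp only [Finset.mem_filter, Finset.mem_Icc]
        have := hfle i hi
        omega
      rw [← Finset.card_filter, this, Nat.card_Icc]
      omega
    rw [Finset.sum_congr rfl h1, Finset.sum_comm]
    apply Finset.sum_congr rfl
    intro d _
    rw [Finset.card_filter]
  -- Step C: counting
  have hcount : ∀ d ∈ Icc 1 (n' - 1),
      (I.filter (fun i => d ≤ f i)).card * ((d+1)/2) ≤ n' := by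
    intro d hd
    rw [Finset.mem_Icc] at hd
    set r : ℕ := (d - 1) / 2 with hr
    set S := I.filter (fun i => d ≤ f i) with hS
    set B : Fin n' → Finset V := fun i => Finset.univ.filter (fun x => G.dist (v i) x ≤ r)
      with hB
    have hdisj : ∀ i ∈ S, ∀ j ∈ S, i ≠ j → Disjoint (B i) (B j) := by
      intro i hi j hj hij
      rw [Finset.disjoint_left]
      intro x hxi hxj
      simp only [hB, Finset.mem_filter, Finset.mem_univ, true_and] at hxi hxj
      have htri : G.dist (v i) (v j) ≤ 2 * r := by
        calc G.dist (v i) (v j) ≤ G.dist (v i) x + G.dist x (v j) := hconn.dist_triangle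
          _ ≤ r + r := by
              rw [SimpleGraph.dist_comm (u := x) (v := v j)]
              omega
          _ = 2 * r := by ring
      have h2r : 2 * r ≤ d - 1 := by omega
      simp only [hS, Finset.mem_filter] at hi hj
      rcases lt_or_gt_of_ne hij with h | h
      · have := hkey i j d hi.2 h
        omega
      · have := hkey j i d hj.2 h
        rw [SimpleGraph.dist_comm] at this
        omega
    have hball : ∀ i ∈ S, r + 1 ≤ (B i).card := by
      intro i _
      apply aux_ball_card hconn
      rw [hcard]
      omega
    have hbu : ∑ i ∈ S, (B i).card ≤ n' := by
      rw [← Finset.card_biUnion hdisj]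
      calc (S.biUnion B).card ≤ Finset.univ.card := Finset.card_le_card (Finset.subset_univ _)
        _ = n' := by rw [Finset.card_univ, hcard]
    have e1 : (d + 1) / 2 = r + 1 := by omega
    calc S.card * ((d+1)/2) = ∑ _i ∈ S, (r + 1) := by
          rw [Finset.sum_const, smul_eq_mul, e1, mul_comm]
      _ ≤ ∑ i ∈ S, (B i).card := Finset.sum_le_sum hball
      _ ≤ n' := hbu
  -- Real-valued chain
  have hKsub : Icc 1 (n' - 1) ⊆ Icc 1 (2 * (n' / 2)) := by
    apply Finset.Icc_subset_Icc_right
    omega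
  calc ((∑ i ∈ I, f i : ℕ) : ℝ)
      = ∑ d ∈ Icc 1 (n' - 1), ((I.filter (fun i => d ≤ f i)).card : ℝ) := by
        rw [hsum]; push_cast; rfl
    _ ≤ ∑ d ∈ Icc 1 (n' - 1), (n' : ℝ) * ((((d+1)/2 : ℕ) : ℝ))⁻¹ := by
        apply Finset.sum_le_sum
        intro d hd
        have hc := hcount d hd
        rw [Finset.mem_Icc] at hd
        have hk : (0:ℝ) < (((d+1)/2 : ℕ) : ℝ) := by
          have : 1 ≤ (d+1)/2 := by omega
          exact_mod_cast Nat.lt_of_lt_of_le Nat.zero_lt_one this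
        calc ((I.filter (fun i => d ≤ f i)).card : ℝ)
            ≤ ((I.filter (fun i => d ≤ f i)).card : ℝ) * (((d+1)/2 : ℕ):ℝ) * (((d+1)/2 : ℕ):ℝ)⁻¹ := by
              rw [mul_assoc, mul_inv_cancel₀ (ne_of_gt hk), mul_one]
          _ ≤ (n' : ℝ) * (((d+1)/2 : ℕ):ℝ)⁻¹ := by
              apply mul_le_mul_of_nonneg_right _ (by positivity)
              exact_mod_cast hc
    _ = (n' : ℝ) * ∑ d ∈ Icc 1 (n' - 1), ((((d+1)/2 : ℕ) : ℝ))⁻¹ := by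
        rw [Finset.mul_sum]
    _ ≤ (n' : ℝ) * ∑ d ∈ Icc 1 (2 * (n' / 2)), ((((d+1)/2 : ℕ) : ℝ))⁻¹ := by
        apply mul_le_mul_of_nonneg_left _ (by positivity)
        apply Finset.sum_le_sum_of_subset_of_nonneg hKsub
        intro d _ _
        positivity
    _ = (n' : ℝ) * (2 * (harmonic (n' / 2) : ℝ)) := by rw [aux_halfsum]
    _ ≤ (n' : ℝ) * (2 * Real.logb 2 n') := by
        apply mul_le_mul_of_nonneg_left _ (by positivity)
        apply mul_le_mul_of_nonneg_left (aux_log n' hn2) (by norm_num)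
    _ = 2 * n' * Real.logb 2 n' := by ring
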